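/- arXiv:1902.02452 — 2 statements merged into one kernel-verified Lean document; each statement's English description precedes it below -/
import Mathlib

section
/- The divergence term in eSURE uses the variance of the retained noise, not the total noise: in the setting y₁ = x + n₁, y₂ = y₁ + z with n₁ ~ N(0,σ₁²I), z ~ N(0,σ_z²I) independent, the estimator (1/N)‖y₁ - h(y₂)‖² - σ₁² + (2(σ₁²+σ_z²)/N)∑ᵢ ∂hᵢ(y₂)/∂(y₂)ᵢ (using total variance σ₁²+σ_z² in the divergence term) is biased for the MSE whenever σ_z > 0 and E[∑ᵢ ∂hᵢ(y₂)/∂(y₂)ᵢ] ≠ 0; its bias equals (2σ_z²/N)·E[∑ᵢ ∂hᵢ(y₂)/∂(y₂)ᵢ]. -/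
open MeasureTheory ProbabilityTheory
open scoped NNReal

open scoped ENNReal
open Real

namespace EsureHelper

lemma abs_le_one_add_sq (t : ℝ) : |t| ≤ 1 + t ^ 2 := by
  nlinarith [sq_nonneg (|t| - 1), sq_abs t, abs_nonneg t]

lemma integrable_one_add_sq_mul_exp {b : ℝ} (hb : 0 < b) :
    Integrable (fun t : ℝ => (1 + t ^ 2) * Real.exp (-b * t ^ 2)) := by
  have h2 : Integrable (fun t : ℝ => t ^ 2 * Real.exp (-b * t ^ 2)) := by
    have hmeas : AEStronglyMeasurable (fun t : ℝ => t ^ 2 * Real.exp (-b * t ^ 2)) volume :=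
      (Continuous.mul (by continuity) (by continuity)).aestronglyMeasurable
    refine ((integrable_exp_neg_mul_sq (half_pos hb)).const_mul (2 / b)).mono' hmeas ?_
    filter_upwards with t
    rw [Real.norm_eq_abs, abs_of_nonneg (by positivity)]
    have h1 : b / 2 * t ^ 2 ≤ Real.exp (b / 2 * t ^ 2) :=
      le_trans (by linarith) (Real.add_one_le_exp _)
    have h0 : t ^ 2 ≤ 2 / b * Real.exp (b / 2 * t ^ 2) := by
      have h2 := mul_le_mul_of_nonneg_left h1 (by positivity : (0:ℝ) ≤ 2 / b)
      calc t ^ 2 = 2 / b * (b / 2 * t ^ 2) := by field_simp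
        _ ≤ _ := h2
    calc t ^ 2 * Real.exp (-b * t ^ 2)
        ≤ (2 / b * Real.exp (b / 2 * t ^ 2)) * Real.exp (-b * t ^ 2) :=
          mul_le_mul_of_nonneg_right h0 (Real.exp_nonneg _)
      _ = 2 / b * Real.exp (-(b / 2) * t ^ 2) := by
          rw [mul_assoc, ← Real.exp_add]; ring_nf
  have := (integrable_exp_neg_mul_sq hb).add h2
  refine this.congr ?_
  filter_upwards with t
  simp only [Pi.add_apply]
  ring

lemma pdf_eq (v : ℝ≥0) (t : ℝ) :
    gaussianPDFReal 0 v t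
      = (Real.sqrt (2 * π * v))⁻¹ * Real.exp (-(2 * (v : ℝ))⁻¹ * t ^ 2) := by
  unfold gaussianPDFReal
  rw [sub_zero]
  congr 2
  field_simp

lemma continuous_pdf (v : ℝ≥0) : Continuous (gaussianPDFReal 0 v) := by
  unfold gaussianPDFReal
  fun_prop

lemma integral_gaussianReal' {v : ℝ≥0} (hv : v ≠ 0) (f : ℝ → ℝ) :
    ∫ t, f t ∂(gaussianReal 0 v) = ∫ t, gaussianPDFReal 0 v t * f t := by
  rw [gaussianReal_of_var_ne_zero _ hv]
  have hmeas : Measurable fun x => (gaussianPDFReal 0 v x).toNNReal :=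
    (measurable_gaussianPDFReal 0 v).real_toNNReal
  rw [show (gaussianPDF 0 v) = fun x => (((gaussianPDFReal 0 v x).toNNReal : ℝ≥0) : ℝ≥0∞)
    from rfl]
  rw [integral_withDensity_eq_integral_smul hmeas f]
  congr 1
  funext t
  rw [NNReal.smul_def, smul_eq_mul, Real.coe_toNNReal _ (gaussianPDFReal_nonneg _ _ _)]

lemma integrable_gaussianReal_iff {v : ℝ≥0} (hv : v ≠ 0) (f : ℝ → ℝ) :
    Integrable f (gaussianReal 0 v) ↔ Integrable (fun t => gaussianPDFReal 0 v t * f t) := by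
  rw [gaussianReal_of_var_ne_zero _ hv]
  have hmeas : Measurable fun x => (gaussianPDFReal 0 v x).toNNReal :=
    (measurable_gaussianPDFReal 0 v).real_toNNReal
  rw [show (gaussianPDF 0 v) = fun x => (((gaussianPDFReal 0 v x).toNNReal : ℝ≥0) : ℝ≥0∞)
    from rfl]
  rw [integrable_withDensity_iff_integrable_smul hmeas]
  constructor <;> intro hh <;> refine hh.congr ?_ <;> filter_upwards with t <;>
    rw [NNReal.smul_def, smul_eq_mul, Real.coe_toNNReal _ (gaussianPDFReal_nonneg _ _ _)]

lemma hasDerivAt_pdf {v : ℝ≥0} (hv : v ≠ 0) (t : ℝ) :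
    HasDerivAt (gaussianPDFReal 0 v) (-(t / v) * gaussianPDFReal 0 v t) t := by
  have hv' : (v : ℝ) ≠ 0 := by exact_mod_cast hv
  have h1 : HasDerivAt (fun x : ℝ => -(x - 0) ^ 2 / (2 * (v : ℝ))) (-(2 * t) / (2 * v)) t := by
    have := ((hasDerivAt_id t).sub_const 0).pow 2
    simpa using (this.neg.div_const (2 * (v : ℝ)))
  have h2 := (h1.exp).const_mul ((Real.sqrt (2 * π * v))⁻¹)
  have : (fun x => (Real.sqrt (2 * π * v))⁻¹ * Real.exp (-(x - 0) ^ 2 / (2 * (v : ℝ))))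
      = gaussianPDFReal 0 v := by
    funext x; unfold gaussianPDFReal; norm_num
  rw [this] at h2
  refine h2.congr_deriv ?_
  unfold gaussianPDFReal
  field_simp



lemma stein1 {v : ℝ≥0} (hv : v ≠ 0) {g g' : ℝ → ℝ} (hg : ∀ t, HasDerivAt g (g' t) t)
    {C : ℝ} (hC : ∀ t, |g' t| ≤ C) :
    ∫ t, t * g t ∂(gaussianReal 0 v) = (v : ℝ) * ∫ t, g' t ∂(gaussianReal 0 v) := by
  have hv' : (v : ℝ) ≠ 0 := by exact_mod_cast hv
  have hvpos : (0 : ℝ) < v := lt_of_le_of_ne v.coe_nonneg (Ne.symm hv')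
  have hC0 : 0 ≤ C := le_trans (abs_nonneg _) (hC 0)
  have hgc : Continuous g := continuous_iff_continuousAt.mpr fun t => (hg t).continuousAt
  have hg'm : AEStronglyMeasurable g' volume := by
    have hd : ∀ t, deriv g t = g' t := fun t => (hg t).deriv
    exact ((measurable_deriv g).aestronglyMeasurable).congr
      (Filter.Eventually.of_forall hd)
  have hgrow : ∀ t : ℝ, |g t| ≤ |g 0| + C * |t| := by
    intro t
    have := Convex.norm_image_sub_le_of_norm_hasDerivWithin_le
      (f := g) (f' := g') (C := C) (s := Set.univ)
      (fun y _ => (hg y).hasDerivWithinAt) (fun y _ => by simpa using hC y)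
      convex_univ (Set.mem_univ 0) (Set.mem_univ t)
    simp only [Real.norm_eq_abs, sub_zero] at this
    calc |g t| = |g 0 + (g t - g 0)| := by ring_nf
      _ ≤ |g 0| + |g t - g 0| := abs_add_le _ _
      _ ≤ |g 0| + C * |t| := by linarith
  set b : ℝ := (2 * (v : ℝ))⁻¹ with hbdef
  have hb : 0 < b := by positivity
  set c₀ : ℝ := (Real.sqrt (2 * π * v))⁻¹ with hc₀def
  have hc₀ : 0 ≤ c₀ := by positivity
  have hpdf : ∀ t, gaussianPDFReal 0 v t = c₀ * Real.exp (-b * t ^ 2) := fun t => pdf_eq v t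
  have hpdfnn : ∀ t, 0 ≤ gaussianPDFReal 0 v t := fun t => gaussianPDFReal_nonneg 0 v t
  have intdom : ∀ K : ℝ, Integrable (fun t => K * ((1 + t ^ 2) * Real.exp (-b * t ^ 2))) :=
    fun K => (integrable_one_add_sq_mul_exp hb).const_mul K
  set V : ℝ → ℝ := fun t => -(v : ℝ) * gaussianPDFReal 0 v t with hVdef
  have hV : ∀ t, HasDerivAt V (t * gaussianPDFReal 0 v t) t := by
    intro t
    have := (hasDerivAt_pdf hv t).const_mul (-(v : ℝ))
    refine this.congr_deriv ?_
    field_simp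
  have key1 : ∀ t : ℝ, |g t| * (1 : ℝ) ≤ (|g 0| + C) * (1 + t ^ 2) := by
    intro t
    have h1 := hgrow t
    have h2 := abs_le_one_add_sq t
    nlinarith [abs_nonneg (g 0), abs_nonneg t, sq_nonneg t]
  have key2 : ∀ t : ℝ, |g t| * |t| ≤ (|g 0| + C) * (1 + t ^ 2) := by
    intro t
    have h1 := hgrow t
    have h2 := abs_le_one_add_sq t
    nlinarith [abs_nonneg (g 0), abs_nonneg t, sq_nonneg t, sq_abs t]
  have huv' : Integrable (fun t => g t * (t * gaussianPDFReal 0 v t)) := by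
    refine (intdom ((|g 0| + C) * c₀)).mono'
      ((hgc.mul (continuous_id.mul (continuous_pdf v))).aestronglyMeasurable) ?_
    filter_upwards with t
    rw [Real.norm_eq_abs, abs_mul, abs_mul, abs_of_nonneg (hpdfnn t), hpdf t]
    calc |g t| * (|t| * (c₀ * Real.exp (-b * t ^ 2)))
        = (|g t| * |t|) * (c₀ * Real.exp (-b * t ^ 2)) := by ring
      _ ≤ ((|g 0| + C) * (1 + t ^ 2)) * (c₀ * Real.exp (-b * t ^ 2)) := by
          exact mul_le_mul_of_nonneg_right (key2 t) (by positivity)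
      _ = (|g 0| + C) * c₀ * ((1 + t ^ 2) * Real.exp (-b * t ^ 2)) := by ring
  have hu'v : Integrable (fun t => g' t * V t) := by
    refine (intdom (C * ((v : ℝ) * c₀))).mono'
      ((hg'm.mul ((continuous_const.mul (continuous_pdf v)).aestronglyMeasurable))) ?_
    filter_upwards with t
    rw [Real.norm_eq_abs, hVdef]
    simp only []
    rw [abs_mul, abs_mul, abs_neg, abs_of_nonneg (v.coe_nonneg), abs_of_nonneg (hpdfnn t),
      hpdf t]
    have h2 : (0:ℝ) ≤ Real.exp (-b * t ^ 2) := (Real.exp_pos _).le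
    have h4 : 0 ≤ C * ((v:ℝ) * c₀) * (t ^ 2 * Real.exp (-b * t ^ 2)) := by positivity
    calc |g' t| * ((v:ℝ) * (c₀ * Real.exp (-b * t ^ 2)))
        ≤ C * ((v:ℝ) * (c₀ * Real.exp (-b * t ^ 2))) :=
          mul_le_mul_of_nonneg_right (hC t) (by positivity)
      _ ≤ C * ((v:ℝ) * c₀) * ((1 + t ^ 2) * Real.exp (-b * t ^ 2)) := by nlinarith [h4]
  have huv : Integrable (fun t => g t * V t) := by
    refine (intdom ((|g 0| + C) * ((v : ℝ) * c₀))).mono'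
      ((hgc.mul (continuous_const.mul (continuous_pdf v))).aestronglyMeasurable) ?_
    filter_upwards with t
    rw [Real.norm_eq_abs, hVdef]
    simp only []
    rw [abs_mul, abs_mul, abs_neg, abs_of_nonneg (v.coe_nonneg), abs_of_nonneg (hpdfnn t),
      hpdf t]
    have h3 : |g t| ≤ (|g 0| + C) * (1 + t ^ 2) := by have := key1 t; linarith [mul_one (|g t|)]
    calc |g t| * ((v:ℝ) * (c₀ * Real.exp (-b * t ^ 2)))
        ≤ ((|g 0| + C) * (1 + t ^ 2)) * ((v:ℝ) * (c₀ * Real.exp (-b * t ^ 2))) :=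
          mul_le_mul_of_nonneg_right h3 (by positivity)
      _ = (|g 0| + C) * ((v:ℝ) * c₀) * ((1 + t ^ 2) * Real.exp (-b * t ^ 2)) := by ring
  have IBP := integral_mul_deriv_eq_deriv_mul_of_integrable (fun t _ => hg t) (fun t _ => hV t) huv' hu'v huv
  calc ∫ t, t * g t ∂(gaussianReal 0 v)
      = ∫ t, gaussianPDFReal 0 v t * (t * g t) := integral_gaussianReal' hv _
    _ = ∫ t, g t * (t * gaussianPDFReal 0 v t) := by congr 1; funext t; ring
    _ = -∫ t, g' t * V t := IBP
    _ = -∫ t, (-(v : ℝ)) * (g' t * gaussianPDFReal 0 v t) := by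
        rw [show (fun t => g' t * V t)
          = fun t => (-(v : ℝ)) * (g' t * gaussianPDFReal 0 v t) from
          funext fun t => by simp only [hVdef]; ring]
    _ = (v : ℝ) * ∫ t, gaussianPDFReal 0 v t * g' t := by
        rw [integral_const_mul]
        rw [show (fun t => g' t * gaussianPDFReal 0 v t)
          = fun t => gaussianPDFReal 0 v t * g' t from funext fun t => mul_comm _ _]
        ring
    _ = (v : ℝ) * ∫ t, g' t ∂(gaussianReal 0 v) := by rw [← integral_gaussianReal' hv]



lemma integral_id_gaussianReal {v : ℝ≥0} (hv : v ≠ 0) :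
    ∫ t, t ∂(gaussianReal 0 v) = 0 := by
  have := stein1 hv (g := fun _ => (1:ℝ)) (g' := fun _ => (0:ℝ))
    (fun t => hasDerivAt_const t 1) (C := 0) (fun t => by simp)
  simpa using this

lemma integral_sq_gaussianReal {v : ℝ≥0} (hv : v ≠ 0) :
    ∫ t, t ^ 2 ∂(gaussianReal 0 v) = (v : ℝ) := by
  have := stein1 hv (g := fun t => t) (g' := fun _ => (1:ℝ))
    (fun t => hasDerivAt_id t) (C := 1) (fun t => by simp)
  rw [show (fun t : ℝ => t ^ 2) = fun t : ℝ => t * t from funext fun t => sq t]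
  rw [this]
  simp [integral_const]

lemma integrable_sq_gaussianReal (v : ℝ≥0) :
    Integrable (fun t : ℝ => t ^ 2) (gaussianReal 0 v) := by
  rcases eq_or_ne v 0 with rfl | hv
  · rw [gaussianReal_zero_var]
    refine ⟨(continuous_pow 2).aestronglyMeasurable, ?_⟩
    simp only [HasFiniteIntegral]
    rw [lintegral_dirac' _ (by measurability)]
    simp
  · rw [integrable_gaussianReal_iff hv]
    have hb : 0 < (2 * (v : ℝ))⁻¹ := by
      have : (0:ℝ) < v := lt_of_le_of_ne v.coe_nonneg (by exact_mod_cast hv.symm)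
      positivity
    refine ((integrable_one_add_sq_mul_exp hb).const_mul
      ((Real.sqrt (2 * π * v))⁻¹)).mono'
      (((continuous_pdf v).mul (continuous_pow 2)).aestronglyMeasurable) ?_
    filter_upwards with t
    rw [Real.norm_eq_abs, pdf_eq]
    have h2 : (0:ℝ) ≤ Real.exp (-(2 * (v : ℝ))⁻¹ * t ^ 2) := (Real.exp_pos _).le
    rw [abs_of_nonneg (by positivity)]
    have h4 : 0 ≤ (Real.sqrt (2 * π * v))⁻¹ * Real.exp (-(2 * (v : ℝ))⁻¹ * t ^ 2) := by
      positivity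
    nlinarith [h4]

lemma integrable_dominated_by_one_add_sq {v : ℝ≥0} {f : ℝ → ℝ}
    (hf : Continuous f) (hb : ∀ t, |f t| ≤ 1 + t ^ 2) :
    Integrable f (gaussianReal 0 v) := by
  refine ((integrable_const (1:ℝ)).add (integrable_sq_gaussianReal v)).mono'
    hf.aestronglyMeasurable ?_
  filter_upwards with t
  simpa using hb t

lemma integrable_abs_gaussianReal (v : ℝ≥0) :
    Integrable (fun t : ℝ => |t|) (gaussianReal 0 v) :=
  integrable_dominated_by_one_add_sq continuous_abs
    (fun t => by rw [abs_abs]; exact abs_le_one_add_sq t)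

lemma integrable_id_gaussianReal (v : ℝ≥0) :
    Integrable (fun t : ℝ => t) (gaussianReal 0 v) :=
  integrable_dominated_by_one_add_sq continuous_id (fun t => abs_le_one_add_sq t)

lemma map_eval_pi {ι : Type*} [Fintype ι] [DecidableEq ι] (γ : Measure ℝ)
    [IsProbabilityMeasure γ] (i : ι) :
    (Measure.pi fun _ : ι => γ).map (Function.eval i) = γ := by
  refine Measure.ext fun s hs => ?_
  rw [Measure.map_apply (measurable_pi_apply i) hs]
  have hpre : Function.eval i ⁻¹' s
      = Set.pi Set.univ (Function.update (fun _ : ι => (Set.univ : Set ℝ)) i s) := by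
    ext a
    simp only [Set.mem_preimage, Set.mem_pi, Set.mem_univ, true_implies,
      Function.update_apply]
    constructor
    · intro ha j
      split_ifs with hj
      · rw [hj]; exact ha
      · trivial
    · intro ha
      have := ha i
      simpa using this
  rw [hpre, Measure.pi_pi]
  calc ∏ j, γ (Function.update (fun _ : ι => (Set.univ : Set ℝ)) i s j)
      = ∏ j, if j = i then γ s else 1 := by
        refine Finset.prod_congr rfl fun j _ => ?_
        rw [Function.update_apply]
        split_ifs <;> simp [measure_univ]
    _ = γ s := by simp



def insR {n : ℕ} (i : Fin (n + 1)) (t : ℝ) (r : Fin n → ℝ) : Fin (n + 1) → ℝ :=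
  i.insertNth t r

@[simp] lemma insR_same {n : ℕ} (i : Fin (n + 1)) (t : ℝ) (r : Fin n → ℝ) :
    insR i t r i = t := by simp [insR]

@[simp] lemma insR_succAbove {n : ℕ} (i : Fin (n + 1)) (t : ℝ) (r : Fin n → ℝ) (j : Fin n) :
    insR i t r (i.succAbove j) = r j := by simp [insR]

lemma insR_self_removeNth {n : ℕ} (i : Fin (n + 1)) (a : Fin (n + 1) → ℝ) :
    insR i (a i) (i.removeNth a) = a := Fin.insertNth_self_removeNth i a

section SteinPi

variable {n : ℕ} {v : ℝ≥0}

lemma norm_h_le {m : ℕ} (h : (Fin m → ℝ) → (Fin m → ℝ)) (hdiff : ContDiff ℝ 1 h)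
    {C : ℝ} (hC : ∀ y, ‖fderiv ℝ h y‖ ≤ C) (y : Fin m → ℝ) :
    ‖h y‖ ≤ ‖h 0‖ + C * ‖y‖ := by
  have hfd : Differentiable ℝ h := hdiff.differentiable one_ne_zero
  have key := Convex.norm_image_sub_le_of_norm_fderiv_le (fun z _ => hfd z)
    (fun z _ => hC z) convex_univ (Set.mem_univ 0) (Set.mem_univ y)
  calc ‖h y‖ = ‖h 0 + (h y - h 0)‖ := by rw [add_sub_cancel]
    _ ≤ ‖h 0‖ + ‖h y - h 0‖ := norm_add_le _ _
    _ ≤ ‖h 0‖ + C * ‖y‖ := by simpa using key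

lemma fderiv_coord_bound {m : ℕ} (h : (Fin m → ℝ) → (Fin m → ℝ))
    {C : ℝ} (hC : ∀ y, ‖fderiv ℝ h y‖ ≤ C) (y : Fin m → ℝ) (i : Fin m) :
    |fderiv ℝ h y (Pi.single i 1) i| ≤ C := by
  have h1 : |fderiv ℝ h y (Pi.single i 1) i| ≤ ‖fderiv ℝ h y (Pi.single i 1)‖ := by
    simpa [Real.norm_eq_abs] using norm_le_pi_norm (fderiv ℝ h y (Pi.single i 1)) i
  have h2 : ‖fderiv ℝ h y (Pi.single i 1)‖ ≤ ‖fderiv ℝ h y‖ * ‖(Pi.single i 1 : Fin m → ℝ)‖ :=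
    ContinuousLinearMap.le_opNorm _ _
  have h3 : ‖(Pi.single i 1 : Fin m → ℝ)‖ = 1 := by rw [Pi.norm_single]; simp
  rw [h3, mul_one] at h2
  exact le_trans h1 (le_trans h2 (hC y))

lemma continuous_insertNth (i : Fin (n + 1)) :
    Continuous (fun z : ℝ × (Fin n → ℝ) => insR i z.1 z.2) := by
  refine continuous_pi fun j => ?_
  refine Fin.succAboveCases i ?_ ?_ j
  · simpa using
      (continuous_fst : Continuous fun z : ℝ × (Fin n → ℝ) => z.1)
  · intro j'
    simpa [Function.comp_def] using
      ((continuous_apply j').comp (continuous_snd : Continuous fun z : ℝ × (Fin n → ℝ) => z.2))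

lemma norm_insertNth_le (i : Fin (n + 1)) (t : ℝ) (r : Fin n → ℝ) :
    ‖insR i t r‖ ≤ |t| + ∑ j, |r j| := by
  refine (pi_norm_le_iff_of_nonneg (by positivity)).mpr fun j => ?_
  refine Fin.succAboveCases i ?_ ?_ j
  · simp only [insR_same, Real.norm_eq_abs]
    have : (0:ℝ) ≤ ∑ j, |r j| := by positivity
    linarith
  · intro j'
    simp only [insR_succAbove, Real.norm_eq_abs]
    have h1 : |r j'| ≤ ∑ j, |r j| :=
      Finset.single_le_sum (f := fun j => |r j|) (fun _ _ => abs_nonneg _) (Finset.mem_univ j')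
    have h2 : (0:ℝ) ≤ |t| := abs_nonneg t
    linarith

lemma hasDerivAt_h_insertNth (h : (Fin (n + 1) → ℝ) → (Fin (n + 1) → ℝ))
    (hdiff : ContDiff ℝ 1 h) (c : Fin (n + 1) → ℝ) (i : Fin (n + 1))
    (r : Fin n → ℝ) (t : ℝ) :
    HasDerivAt (fun s => h (c + insR i s r) i)
      (fderiv ℝ h (c + insR i t r) (Pi.single i 1) i) t := by
  have hfd : Differentiable ℝ h := hdiff.differentiable one_ne_zero
  have haff : HasDerivAt (fun s : ℝ => c + insR i s r) (Pi.single i 1) t := by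
    have h0 : (fun s : ℝ => c + insR i s r)
        = fun s => (c + insR i 0 r) + s • Pi.single i 1 := by
      funext s
      funext j
      rcases eq_or_ne j i with rfl | hj
      · simp
      · obtain ⟨j', rfl⟩ := Fin.exists_succAbove_eq hj
        simp [Pi.single_eq_of_ne (Fin.succAbove_ne i j')]
    rw [h0]
    simpa using ((hasDerivAt_id t).smul_const (Pi.single i 1 : Fin (n+1) → ℝ)).const_add
      (c + insR i 0 r)
  have hcomp := (hfd (c + insR i t r)).hasFDerivAt.comp_hasDerivAt t haff
  have := (ContinuousLinearMap.proj (R := ℝ) (φ := fun _ : Fin (n+1) => ℝ)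
    i).hasFDerivAt.comp_hasDerivAt t hcomp
  exact this

lemma steinPi (hv : v ≠ 0)
    (h : (Fin (n + 1) → ℝ) → (Fin (n + 1) → ℝ)) (hdiff : ContDiff ℝ 1 h)
    {C : ℝ} (hC : ∀ y, ‖fderiv ℝ h y‖ ≤ C) (c : Fin (n + 1) → ℝ) (i : Fin (n + 1)) :
    ∫ a, a i * h (c + a) i ∂(Measure.pi fun _ : Fin (n + 1) => gaussianReal 0 v)
      = (v : ℝ) * ∫ a, fderiv ℝ h (c + a) (Pi.single i 1) i
          ∂(Measure.pi fun _ : Fin (n + 1) => gaussianReal 0 v) := by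
  set γ := gaussianReal 0 v with hγ
  set P1 : Measure (Fin (n + 1) → ℝ) := Measure.pi fun _ => γ with hP1
  set Pn : Measure (Fin n → ℝ) := Measure.pi fun _ => γ with hPn
  have hC0 : 0 ≤ C := le_trans (norm_nonneg _) (hC 0)
  have hcont : Continuous h := hdiff.continuous
  have hfc : Continuous (fun y => fderiv ℝ h y) := hdiff.continuous_fderiv one_ne_zero
  have hins := continuous_insertNth (n := n) i
  have mp := measurePreserving_piFinSuccAbove (fun _ : Fin (n + 1) => γ) i
  set e := MeasurableEquiv.piFinSuccAbove (fun _ : Fin (n + 1) => ℝ) i with he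
  have hGe : ∀ a : Fin (n + 1) → ℝ,
      (e a).1 * h (c + insR i (e a).1 (e a).2) i = a i * h (c + a) i := by
    intro a
    have h1 : (e a).1 = a i := rfl
    have h2 : (e a).2 = i.removeNth a := rfl
    rw [h1, h2, insR_self_removeNth]
  have hG'e : ∀ a : Fin (n + 1) → ℝ,
      fderiv ℝ h (c + insR i (e a).1 (e a).2) (Pi.single i 1) i
        = fderiv ℝ h (c + a) (Pi.single i 1) i := by
    intro a
    have h1 : (e a).1 = a i := rfl
    have h2 : (e a).2 = i.removeNth a := rfl
    rw [h1, h2, insR_self_removeNth]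
  -- integrability of G over the product
  have hintabs_n : Integrable (fun r : Fin n → ℝ => ∑ j, |r j|) Pn := by
    refine integrable_finset_sum _ fun j _ => ?_
    have hmap : Pn.map (Function.eval j) = γ := map_eval_pi γ j
    have h0 : Integrable (fun t : ℝ => |t|) (Pn.map (Function.eval j)) := by
      rw [hmap]; exact integrable_abs_gaussianReal v
    exact (integrable_map_measure continuous_abs.aestronglyMeasurable
      (measurable_pi_apply j).aemeasurable).mp h0
  have hf1 : Integrable (fun t : ℝ => |t| + t ^ 2) γ :=
    (integrable_abs_gaussianReal v).add (integrable_sq_gaussianReal v)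
  have hg1 : Integrable
      (fun r : Fin n → ℝ => (‖h 0‖ + C * ‖c‖ + C) + C * ∑ j, |r j|) Pn :=
    (integrable_const _).add (hintabs_n.const_mul C)
  have hGcont : Continuous (fun z : ℝ × (Fin n → ℝ) => z.1 * h (c + insR i z.1 z.2) i) :=
    continuous_fst.mul ((continuous_apply i).comp (hcont.comp (continuous_const.add hins)))
  have hGint : Integrable (fun z : ℝ × (Fin n → ℝ) => z.1 * h (c + insR i z.1 z.2) i)
      (γ.prod Pn) := by
    refine (hf1.mul_prod hg1).mono' hGcont.aestronglyMeasurable ?_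
    filter_upwards with z
    have hS : (0:ℝ) ≤ ∑ j, |z.2 j| := by positivity
    have habs : |h (c + insR i z.1 z.2) i|
        ≤ ‖h 0‖ + C * ‖c‖ + C * |z.1| + C * ∑ j, |z.2 j| := by
      have h1 : |h (c + insR i z.1 z.2) i| ≤ ‖h (c + insR i z.1 z.2)‖ := by
        simpa [Real.norm_eq_abs] using norm_le_pi_norm (h (c + insR i z.1 z.2)) i
      have h2 := norm_h_le h hdiff hC (c + insR i z.1 z.2)
      have h3 : ‖c + insR i z.1 z.2‖ ≤ ‖c‖ + (|z.1| + ∑ j, |z.2 j|) :=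
        le_trans (norm_add_le _ _) (by linarith [norm_insertNth_le i z.1 z.2])
      have h4 : C * ‖c + insR i z.1 z.2‖ ≤ C * (‖c‖ + (|z.1| + ∑ j, |z.2 j|)) :=
        mul_le_mul_of_nonneg_left h3 hC0
      calc |h (c + insR i z.1 z.2) i| ≤ ‖h (c + insR i z.1 z.2)‖ := h1
        _ ≤ ‖h 0‖ + C * ‖c + insR i z.1 z.2‖ := h2
        _ ≤ ‖h 0‖ + C * ‖c‖ + C * |z.1| + C * ∑ j, |z.2 j| := by linarith
    rw [Real.norm_eq_abs, abs_mul]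
    have ht : (0:ℝ) ≤ |z.1| := abs_nonneg _
    have hstep := mul_le_mul_of_nonneg_left habs ht
    have hsq : |z.1| * |z.1| = z.1 ^ 2 := by rw [← abs_mul, abs_mul_self]; ring
    calc |z.1| * |h (c + insR i z.1 z.2) i|
        ≤ |z.1| * (‖h 0‖ + C * ‖c‖ + C * |z.1| + C * ∑ j, |z.2 j|) := hstep
      _ ≤ (|z.1| + z.1 ^ 2) * ((‖h 0‖ + C * ‖c‖ + C) + C * ∑ j, |z.2 j|) := by
          nlinarith [sq_nonneg z.1, mul_nonneg hC0 hS, norm_nonneg (h 0), norm_nonneg c,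
            mul_nonneg (mul_nonneg hC0 hS) (sq_nonneg z.1), mul_nonneg hC0 ht,
            mul_nonneg (norm_nonneg (h 0)) (sq_nonneg z.1),
            mul_nonneg (mul_nonneg hC0 (norm_nonneg c)) (sq_nonneg z.1)]
  have hG'cont : Continuous
      (fun z : ℝ × (Fin n → ℝ) => fderiv ℝ h (c + insR i z.1 z.2) (Pi.single i 1) i) :=
    (continuous_apply i).comp
      (((hfc.comp (continuous_const.add hins)).clm_apply continuous_const))
  have hG'int : Integrable
      (fun z : ℝ × (Fin n → ℝ) => fderiv ℝ h (c + insR i z.1 z.2) (Pi.single i 1) i)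
      (γ.prod Pn) := by
    refine (integrable_const C).mono' hG'cont.aestronglyMeasurable ?_
    filter_upwards with z
    simpa [Real.norm_eq_abs] using fderiv_coord_bound h hC (c + insR i z.1 z.2) i
  calc ∫ a, a i * h (c + a) i ∂P1
      = ∫ a, (e a).1 * h (c + insR i (e a).1 (e a).2) i ∂P1 :=
        integral_congr_ae (Filter.Eventually.of_forall fun a => (hGe a).symm)
    _ = ∫ z, z.1 * h (c + insR i z.1 z.2) i ∂(γ.prod Pn) :=
        mp.integral_comp' (fun z => z.1 * h (c + insR i z.1 z.2) i)
    _ = ∫ r, ∫ t, (t, r).1 * h (c + insR i (t, r).1 (t, r).2) i ∂γ ∂Pn :=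
        integral_prod_symm _ hGint
    _ = ∫ r, (v : ℝ) * ∫ t, fderiv ℝ h (c + insR i t r) (Pi.single i 1) i ∂γ ∂Pn := by
        refine integral_congr_ae (Filter.Eventually.of_forall fun r => ?_)
        exact stein1 hv (g := fun t => h (c + insR i t r) i)
          (g' := fun t => fderiv ℝ h (c + insR i t r) (Pi.single i 1) i)
          (fun t => hasDerivAt_h_insertNth h hdiff c i r t)
          (fun t => fderiv_coord_bound h hC _ i)
    _ = (v : ℝ) * ∫ r, ∫ t, fderiv ℝ h (c + insR i t r) (Pi.single i 1) i ∂γ ∂Pn :=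
        integral_const_mul _ _
    _ = (v : ℝ) * ∫ z, fderiv ℝ h (c + insR i z.1 z.2) (Pi.single i 1) i ∂(γ.prod Pn) := by
        rw [← integral_prod_symm _ hG'int]
    _ = (v : ℝ) * ∫ a, fderiv ℝ h (c + insR i (e a).1 (e a).2) (Pi.single i 1) i ∂P1 := by
        rw [mp.integral_comp' (fun z => fderiv ℝ h (c + insR i z.1 z.2) (Pi.single i 1) i)]
    _ = (v : ℝ) * ∫ a, fderiv ℝ h (c + a) (Pi.single i 1) i ∂P1 := by
        congr 1
        exact integral_congr_ae (Filter.Eventually.of_forall fun a => hG'e a)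

end SteinPi



lemma norm_pi_le_sum {m : ℕ} (a : Fin m → ℝ) : ‖a‖ ≤ ∑ j, |a j| := by
  refine (pi_norm_le_iff_of_nonneg (by positivity)).mpr fun j => ?_
  simpa [Real.norm_eq_abs] using Finset.single_le_sum (f := fun j => |a j|)
    (fun _ _ => abs_nonneg _) (Finset.mem_univ j)

set_option maxHeartbeats 2000000 in
theorem main_eq (N : ℕ) (hN : 0 < N) (x : Fin N → ℝ)
    (σ₁ σz : ℝ≥0) (hσ₁ : 0 < σ₁)
    (h : (Fin N → ℝ) → (Fin N → ℝ)) (hdiff : ContDiff ℝ 1 h)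
    (C : ℝ) (hC : ∀ v : Fin N → ℝ, ‖fderiv ℝ h v‖ ≤ C) :
    ((∫ p : (Fin N → ℝ) × (Fin N → ℝ),
        ((1 / (N : ℝ)) * ∑ i, ((x + p.1) i - h (x + p.1 + p.2) i) ^ 2
          - (σ₁ : ℝ) ^ 2
          + (2 * ((σ₁ : ℝ) ^ 2 + (σz : ℝ) ^ 2) / (N : ℝ))
            * ∑ i, fderiv ℝ h (x + p.1 + p.2) (Pi.single i 1) i)
      ∂((Measure.pi fun _ : Fin N => gaussianReal 0 (σ₁ ^ 2)).prod
          (Measure.pi fun _ : Fin N => gaussianReal 0 (σz ^ 2))))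
      - ∫ p : (Fin N → ℝ) × (Fin N → ℝ),
          (1 / (N : ℝ)) * ∑ i, (x i - h (x + p.1 + p.2) i) ^ 2
        ∂((Measure.pi fun _ : Fin N => gaussianReal 0 (σ₁ ^ 2)).prod
            (Measure.pi fun _ : Fin N => gaussianReal 0 (σz ^ 2)))
      = (2 * (σz : ℝ) ^ 2 / (N : ℝ))
        * ∫ p : (Fin N → ℝ) × (Fin N → ℝ),
            ∑ i, fderiv ℝ h (x + p.1 + p.2) (Pi.single i 1) i
          ∂((Measure.pi fun _ : Fin N => gaussianReal 0 (σ₁ ^ 2)).prod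
              (Measure.pi fun _ : Fin N => gaussianReal 0 (σz ^ 2)))) := by
  obtain ⟨n, rfl⟩ : ∃ n, N = n + 1 := ⟨N - 1, (Nat.succ_pred_eq_of_pos hN).symm⟩
  have hv₁ : (σ₁ ^ 2 : ℝ≥0) ≠ 0 := pow_ne_zero _ hσ₁.ne'
  set μ1 : Measure (Fin (n + 1) → ℝ) := Measure.pi fun _ => gaussianReal 0 (σ₁ ^ 2) with hμ1
  set μ2 : Measure (Fin (n + 1) → ℝ) := Measure.pi fun _ => gaussianReal 0 (σz ^ 2) with hμ2
  set P : Measure ((Fin (n + 1) → ℝ) × (Fin (n + 1) → ℝ)) := μ1.prod μ2 with hP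
  have hC0 : 0 ≤ C := le_trans (norm_nonneg _) (hC 0)
  have hcont : Continuous h := hdiff.continuous
  have hfc : Continuous (fun y => fderiv ℝ h y) := hdiff.continuous_fderiv one_ne_zero
  have hwcont : Continuous (fun p : (Fin (n + 1) → ℝ) × (Fin (n + 1) → ℝ) => x + p.1 + p.2) :=
    (continuous_const.add continuous_fst).add continuous_snd
  -- coordinate maps
  have hmap1 : ∀ i : Fin (n + 1),
      P.map (fun p : (Fin (n + 1) → ℝ) × (Fin (n + 1) → ℝ) => p.1 i)
        = gaussianReal 0 (σ₁ ^ 2) := by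
    intro i
    have heq : (fun p : (Fin (n + 1) → ℝ) × (Fin (n + 1) → ℝ) => p.1 i)
        = Function.eval i ∘ Prod.fst := rfl
    rw [heq, ← Measure.map_map (measurable_pi_apply i) measurable_fst, hP,
      Measure.map_fst_prod, measure_univ, one_smul, hμ1, map_eval_pi]
  have hmap2 : ∀ i : Fin (n + 1),
      P.map (fun p : (Fin (n + 1) → ℝ) × (Fin (n + 1) → ℝ) => p.2 i)
        = gaussianReal 0 (σz ^ 2) := by
    intro i
    have heq : (fun p : (Fin (n + 1) → ℝ) × (Fin (n + 1) → ℝ) => p.2 i)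
        = Function.eval i ∘ Prod.snd := rfl
    rw [heq, ← Measure.map_map (measurable_pi_apply i) measurable_snd, hP,
      Measure.map_snd_prod, measure_univ, one_smul, hμ2, map_eval_pi]
  -- transfers
  have htrans1 : ∀ (i : Fin (n + 1)) (f : ℝ → ℝ), Continuous f →
      Integrable f (gaussianReal 0 (σ₁ ^ 2)) →
      Integrable (fun p : (Fin (n + 1) → ℝ) × (Fin (n + 1) → ℝ) => f (p.1 i)) P := by
    intro i f hf hint
    have h0 : Integrable f (P.map (fun p : (Fin (n + 1) → ℝ) × (Fin (n + 1) → ℝ) => p.1 i)) := by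
      rw [hmap1 i]; exact hint
    exact (integrable_map_measure hf.aestronglyMeasurable
      ((measurable_pi_apply i).comp measurable_fst).aemeasurable).mp h0
  have htrans2 : ∀ (i : Fin (n + 1)) (f : ℝ → ℝ), Continuous f →
      Integrable f (gaussianReal 0 (σz ^ 2)) →
      Integrable (fun p : (Fin (n + 1) → ℝ) × (Fin (n + 1) → ℝ) => f (p.2 i)) P := by
    intro i f hf hint
    have h0 : Integrable f (P.map (fun p : (Fin (n + 1) → ℝ) × (Fin (n + 1) → ℝ) => p.2 i)) := by
      rw [hmap2 i]; exact hint
    exact (integrable_map_measure hf.aestronglyMeasurable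
      ((measurable_pi_apply i).comp measurable_snd).aemeasurable).mp h0
  have hval1 : ∀ (i : Fin (n + 1)) (f : ℝ → ℝ), Continuous f →
      ∫ p, f (p.1 i) ∂P = ∫ t, f t ∂(gaussianReal 0 (σ₁ ^ 2)) := by
    intro i f hf
    rw [← hmap1 i, integral_map
      ((show Measurable fun p : (Fin (n + 1) → ℝ) × (Fin (n + 1) → ℝ) => p.1 i from
        (measurable_pi_apply i).comp measurable_fst).aemeasurable)
      hf.aestronglyMeasurable]
  -- basic integrable families
  have int_sq1 : ∀ i, Integrable
      (fun p : (Fin (n + 1) → ℝ) × (Fin (n + 1) → ℝ) => (p.1 i) ^ 2) P :=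
    fun i => htrans1 i _ (continuous_pow 2) (integrable_sq_gaussianReal _)
  have int_sq2 : ∀ i, Integrable
      (fun p : (Fin (n + 1) → ℝ) × (Fin (n + 1) → ℝ) => (p.2 i) ^ 2) P :=
    fun i => htrans2 i _ (continuous_pow 2) (integrable_sq_gaussianReal _)
  have int_p1 : ∀ i, Integrable
      (fun p : (Fin (n + 1) → ℝ) × (Fin (n + 1) → ℝ) => p.1 i) P :=
    fun i => htrans1 i _ continuous_id (integrable_id_gaussianReal _)
  have val_sq1 : ∀ i, ∫ p, (p.1 i) ^ 2 ∂P = ((σ₁ ^ 2 : ℝ≥0) : ℝ) := by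
    intro i
    rw [hval1 i _ (continuous_pow 2), integral_sq_gaussianReal hv₁]
  have val_p1 : ∀ i, ∫ p, p.1 i ∂P = 0 := by
    intro i
    rw [hval1 i (fun t => t) continuous_id, integral_id_gaussianReal hv₁]
  -- dominator machinery
  set S1 : (Fin (n + 1) → ℝ) × (Fin (n + 1) → ℝ) → ℝ := fun p => ∑ j, |p.1 j| with hS1def
  set S2 : (Fin (n + 1) → ℝ) × (Fin (n + 1) → ℝ) → ℝ := fun p => ∑ j, |p.2 j| with hS2def
  have hS1c : Continuous S1 :=
    continuous_finset_sum _ fun j _ => ((continuous_apply j).comp continuous_fst).abs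
  have hS2c : Continuous S2 :=
    continuous_finset_sum _ fun j _ => ((continuous_apply j).comp continuous_snd).abs
  have hS1nn : ∀ p, 0 ≤ S1 p := fun p => Finset.sum_nonneg fun _ _ => abs_nonneg _
  have hS2nn : ∀ p, 0 ≤ S2 p := fun p => Finset.sum_nonneg fun _ _ => abs_nonneg _
  set A0 : ℝ := ‖h 0‖ + C * ‖x‖ with hA0def
  have hA00 : 0 ≤ A0 := by positivity
  set A' : ℝ := ‖x‖ + A0 with hA'def
  have hA'0 : 0 ≤ A' := by positivity
  set B : (Fin (n + 1) → ℝ) × (Fin (n + 1) → ℝ) → ℝ :=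
    fun p => A' + (C + 1) * (S1 p + S2 p) with hBdef
  have hBc : Continuous B := continuous_const.add (continuous_const.mul (hS1c.add hS2c))
  have hB0 : ∀ p, 0 ≤ B p := by
    intro p
    have := hS1nn p; have := hS2nn p
    simp only [hBdef]
    nlinarith
  have hHb : ∀ (p : (Fin (n + 1) → ℝ) × (Fin (n + 1) → ℝ)) (i : Fin (n + 1)),
      |h (x + p.1 + p.2) i| ≤ A0 + C * (S1 p + S2 p) := by
    intro p i
    have h1 : |h (x + p.1 + p.2) i| ≤ ‖h (x + p.1 + p.2)‖ := by
      simpa [Real.norm_eq_abs] using norm_le_pi_norm (h (x + p.1 + p.2)) i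
    have h2 := norm_h_le h hdiff hC (x + p.1 + p.2)
    have h3 : ‖x + p.1 + p.2‖ ≤ ‖x‖ + (S1 p + S2 p) := by
      have e1 := norm_pi_le_sum p.1
      have e2 := norm_pi_le_sum p.2
      calc ‖x + p.1 + p.2‖ ≤ ‖x + p.1‖ + ‖p.2‖ := norm_add_le _ _
        _ ≤ ‖x‖ + ‖p.1‖ + ‖p.2‖ := by linarith [norm_add_le x p.1]
        _ ≤ ‖x‖ + (S1 p + S2 p) := by simp only [hS1def, hS2def]; linarith
    have h4 := mul_le_mul_of_nonneg_left h3 hC0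
    simp only [hA0def]
    linarith
  have hHB : ∀ (p : (Fin (n + 1) → ℝ) × (Fin (n + 1) → ℝ)) (i : Fin (n + 1)),
      |h (x + p.1 + p.2) i| ≤ B p := by
    intro p i
    have := hHb p i
    have := hS1nn p; have := hS2nn p
    simp only [hBdef, hA'def]
    nlinarith [norm_nonneg x]
  have hKb : ∀ (p : (Fin (n + 1) → ℝ) × (Fin (n + 1) → ℝ)) (i : Fin (n + 1)),
      |x i - h (x + p.1 + p.2) i| ≤ B p := by
    intro p i
    have h1 : |x i| ≤ ‖x‖ := by simpa [Real.norm_eq_abs] using norm_le_pi_norm x i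
    have h2 := hHb p i
    have hs1 := hS1nn p; have hs2 := hS2nn p
    rw [sub_eq_add_neg]
    refine le_trans (abs_add_le _ _) ?_
    rw [abs_neg]
    simp only [hBdef, hA'def]
    nlinarith
  have hp1B : ∀ (p : (Fin (n + 1) → ℝ) × (Fin (n + 1) → ℝ)) (i : Fin (n + 1)),
      |p.1 i| ≤ B p := by
    intro p i
    have h1 : |p.1 i| ≤ S1 p := by
      simp only [hS1def]
      exact Finset.single_le_sum (f := fun j => |p.1 j|) (fun _ _ => abs_nonneg _)
        (Finset.mem_univ i)
    have hs1 := hS1nn p; have hs2 := hS2nn p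
    simp only [hBdef]
    nlinarith
  have hCS1 : ∀ p : (Fin (n + 1) → ℝ) × (Fin (n + 1) → ℝ),
      (S1 p) ^ 2 ≤ ((n : ℝ) + 1) * ∑ j, (p.1 j) ^ 2 := by
    intro p
    have hh := sq_sum_le_card_mul_sum_sq (s := (Finset.univ : Finset (Fin (n + 1))))
      (f := fun j => |p.1 j|)
    simp only [Finset.card_univ, Fintype.card_fin, sq_abs] at hh
    simp only [hS1def]
    refine hh.trans_eq ?_
    push_cast
    ring
  have hCS2 : ∀ p : (Fin (n + 1) → ℝ) × (Fin (n + 1) → ℝ),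
      (S2 p) ^ 2 ≤ ((n : ℝ) + 1) * ∑ j, (p.2 j) ^ 2 := by
    intro p
    have hh := sq_sum_le_card_mul_sum_sq (s := (Finset.univ : Finset (Fin (n + 1))))
      (f := fun j => |p.2 j|)
    simp only [Finset.card_univ, Fintype.card_fin, sq_abs] at hh
    simp only [hS2def]
    refine hh.trans_eq ?_
    push_cast
    ring
  have intDom : Integrable (fun p : (Fin (n + 1) → ℝ) × (Fin (n + 1) → ℝ) =>
      8 * A' ^ 2 + 32 * (C + 1) ^ 2 * ((n : ℝ) + 1)
        * (∑ j, (p.1 j) ^ 2 + ∑ j, (p.2 j) ^ 2)) P :=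
    (integrable_const _).add (((integrable_finset_sum _ fun j _ => int_sq1 j).add
      (integrable_finset_sum _ fun j _ => int_sq2 j)).const_mul _)
  have intB2 : Integrable (fun p => 4 * B p ^ 2) P := by
    refine intDom.mono' ((continuous_const.mul (hBc.pow 2)).aestronglyMeasurable) ?_
    filter_upwards with p
    have h1 := hCS1 p
    have h2 := hCS2 p
    have hs1 := hS1nn p; have hs2 := hS2nn p
    have hq1 : (0:ℝ) ≤ ∑ j, (p.1 j) ^ 2 := by positivity
    have hq2 : (0:ℝ) ≤ ∑ j, (p.2 j) ^ 2 := by positivity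
    rw [Real.norm_eq_abs, abs_of_nonneg (by positivity)]
    simp only [hBdef]
    nlinarith [sq_nonneg (A' - (C + 1) * (S1 p + S2 p)), sq_nonneg (S1 p - S2 p),
      mul_le_mul_of_nonneg_left h1 (show (0:ℝ) ≤ (C + 1) ^ 2 by positivity),
      mul_le_mul_of_nonneg_left h2 (show (0:ℝ) ≤ (C + 1) ^ 2 by positivity),
      mul_nonneg (sq_nonneg (C + 1)) (sq_nonneg (S1 p - S2 p)), hA'0, hC0]
  -- continuity of integrands
  have measb : ∀ i : Fin (n + 1),
      Continuous (fun p : (Fin (n + 1) → ℝ) × (Fin (n + 1) → ℝ) => h (x + p.1 + p.2) i) :=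
    fun i => (continuous_apply i).comp (hcont.comp hwcont)
  have measd : ∀ i : Fin (n + 1), Continuous
      (fun p : (Fin (n + 1) → ℝ) × (Fin (n + 1) → ℝ) =>
        fderiv ℝ h (x + p.1 + p.2) (Pi.single i 1) i) :=
    fun i => (continuous_apply i).comp ((hfc.comp hwcont).clm_apply continuous_const)
  have int_d : ∀ i, Integrable
      (fun p : (Fin (n + 1) → ℝ) × (Fin (n + 1) → ℝ) =>
        fderiv ℝ h (x + p.1 + p.2) (Pi.single i 1) i) P := by
    intro i
    refine (integrable_const C).mono' (measd i).aestronglyMeasurable ?_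
    filter_upwards with p
    simpa [Real.norm_eq_abs] using fderiv_coord_bound h hC (x + p.1 + p.2) i
  have int_Ksq : ∀ i, Integrable
      (fun p : (Fin (n + 1) → ℝ) × (Fin (n + 1) → ℝ) =>
        (x i - h (x + p.1 + p.2) i) ^ 2) P := by
    intro i
    refine intB2.mono' ((continuous_const.sub (measb i)).pow 2).aestronglyMeasurable ?_
    filter_upwards with p
    rw [Real.norm_eq_abs, abs_of_nonneg (sq_nonneg _)]
    have h1 := hKb p i
    have h2 := hB0 p
    nlinarith [sq_abs (x i - h (x + p.1 + p.2) i), abs_nonneg (x i - h (x + p.1 + p.2) i)]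
  have int_f : ∀ i, Integrable
      (fun p : (Fin (n + 1) → ℝ) × (Fin (n + 1) → ℝ) =>
        ((x + p.1) i - h (x + p.1 + p.2) i) ^ 2) P := by
    intro i
    have hcnt : Continuous (fun p : (Fin (n + 1) → ℝ) × (Fin (n + 1) → ℝ) =>
        ((x + p.1) i - h (x + p.1 + p.2) i) ^ 2) := by
      refine (Continuous.sub ?_ (measb i)).pow 2
      exact (continuous_apply i).comp (continuous_const.add continuous_fst)
    refine intB2.mono' hcnt.aestronglyMeasurable ?_
    filter_upwards with p
    rw [Real.norm_eq_abs, abs_of_nonneg (sq_nonneg _)]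
    have h1 := hKb p i
    have h2 := hp1B p i
    have h3 := hB0 p
    have h4 : |(x + p.1) i - h (x + p.1 + p.2) i| ≤ 2 * B p := by
      have : (x + p.1) i - h (x + p.1 + p.2) i
          = (x i - h (x + p.1 + p.2) i) + p.1 i := by simp [Pi.add_apply]; ring
      rw [this]
      refine le_trans (abs_add_le _ _) ?_
      linarith
    nlinarith [sq_abs ((x + p.1) i - h (x + p.1 + p.2) i),
      abs_nonneg ((x + p.1) i - h (x + p.1 + p.2) i)]
  have int_mix : ∀ i, Integrable
      (fun p : (Fin (n + 1) → ℝ) × (Fin (n + 1) → ℝ) =>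
        p.1 i * (x i - h (x + p.1 + p.2) i)) P := by
    intro i
    have hcnt : Continuous (fun p : (Fin (n + 1) → ℝ) × (Fin (n + 1) → ℝ) =>
        p.1 i * (x i - h (x + p.1 + p.2) i)) :=
      ((continuous_apply i).comp continuous_fst).mul (continuous_const.sub (measb i))
    refine intB2.mono' hcnt.aestronglyMeasurable ?_
    filter_upwards with p
    rw [Real.norm_eq_abs, abs_mul]
    have h1 := hKb p i
    have h2 := hp1B p i
    have h3 := hB0 p
    nlinarith [abs_nonneg (p.1 i), abs_nonneg (x i - h (x + p.1 + p.2) i)]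
  have int_ph : ∀ i, Integrable
      (fun p : (Fin (n + 1) → ℝ) × (Fin (n + 1) → ℝ) =>
        p.1 i * h (x + p.1 + p.2) i) P := by
    intro i
    have hcnt : Continuous (fun p : (Fin (n + 1) → ℝ) × (Fin (n + 1) → ℝ) =>
        p.1 i * h (x + p.1 + p.2) i) :=
      ((continuous_apply i).comp continuous_fst).mul (measb i)
    refine intB2.mono' hcnt.aestronglyMeasurable ?_
    filter_upwards with p
    rw [Real.norm_eq_abs, abs_mul]
    have h1 := hHB p i
    have h2 := hp1B p i
    have h3 := hB0 p
    nlinarith [abs_nonneg (p.1 i), abs_nonneg (h (x + p.1 + p.2) i)]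
  have int_D : Integrable (fun p : (Fin (n + 1) → ℝ) × (Fin (n + 1) → ℝ) =>
      ∑ i, fderiv ℝ h (x + p.1 + p.2) (Pi.single i 1) i) P :=
    integrable_finset_sum _ fun i _ => int_d i
  -- Stein at the product level
  have steinB : ∀ i : Fin (n + 1),
      ∫ p, p.1 i * h (x + p.1 + p.2) i ∂P
        = ((σ₁ ^ 2 : ℝ≥0) : ℝ)
          * ∫ p, fderiv ℝ h (x + p.1 + p.2) (Pi.single i 1) i ∂P := by
    intro i
    have hl : ∫ p, p.1 i * h (x + p.1 + p.2) i ∂P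
        = ∫ b, ∫ a, a i * h (x + a + b) i ∂μ1 ∂μ2 :=
      integral_prod_symm
        (f := fun p : (Fin (n + 1) → ℝ) × (Fin (n + 1) → ℝ) => p.1 i * h (x + p.1 + p.2) i)
        (int_ph i)
    have hr : ∫ p, fderiv ℝ h (x + p.1 + p.2) (Pi.single i 1) i ∂P
        = ∫ b, ∫ a, fderiv ℝ h (x + a + b) (Pi.single i 1) i ∂μ1 ∂μ2 :=
      integral_prod_symm
        (f := fun p : (Fin (n + 1) → ℝ) × (Fin (n + 1) → ℝ) =>
          fderiv ℝ h (x + p.1 + p.2) (Pi.single i 1) i) (int_d i)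
    rw [hl, hr, ← integral_const_mul]
    refine integral_congr_ae (Filter.Eventually.of_forall fun b => ?_)
    have hc1 : ∀ a : Fin (n + 1) → ℝ, x + a + b = (x + b) + a := fun a => by abel
    calc ∫ a, a i * h (x + a + b) i ∂μ1
        = ∫ a, a i * h ((x + b) + a) i ∂μ1 :=
          integral_congr_ae (Filter.Eventually.of_forall fun a : Fin (n + 1) → ℝ =>
            show a i * h (x + a + b) i = a i * h ((x + b) + a) i by rw [hc1])
      _ = ((σ₁ ^ 2 : ℝ≥0) : ℝ) * ∫ a, fderiv ℝ h ((x + b) + a) (Pi.single i 1) i ∂μ1 :=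
          steinPi hv₁ h hdiff hC (x + b) i
      _ = ((σ₁ ^ 2 : ℝ≥0) : ℝ) * ∫ a, fderiv ℝ h (x + a + b) (Pi.single i 1) i ∂μ1 := by
          rw [integral_congr_ae (Filter.Eventually.of_forall fun a : Fin (n + 1) → ℝ =>
            show fderiv ℝ h ((x + b) + a) (Pi.single i 1) i
              = fderiv ℝ h (x + a + b) (Pi.single i 1) i by rw [hc1])]
  -- expanded integrals
  have val_D : ∫ p, (∑ i, fderiv ℝ h (x + p.1 + p.2) (Pi.single i 1) i) ∂P
      = ∑ i, ∫ p, fderiv ℝ h (x + p.1 + p.2) (Pi.single i 1) i ∂P :=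
    integral_finset_sum _ fun i _ => int_d i
  have val_mix : ∀ i, ∫ p, p.1 i * (x i - h (x + p.1 + p.2) i) ∂P
      = -(((σ₁ ^ 2 : ℝ≥0) : ℝ)
          * ∫ p, fderiv ℝ h (x + p.1 + p.2) (Pi.single i 1) i ∂P) := by
    intro i
    have hexp : ∀ p : (Fin (n + 1) → ℝ) × (Fin (n + 1) → ℝ),
        p.1 i * (x i - h (x + p.1 + p.2) i)
          = x i * p.1 i - p.1 i * h (x + p.1 + p.2) i := by intro p; ring
    calc ∫ p, p.1 i * (x i - h (x + p.1 + p.2) i) ∂P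
        = ∫ p, (x i * p.1 i - p.1 i * h (x + p.1 + p.2) i) ∂P :=
          integral_congr_ae (Filter.Eventually.of_forall hexp)
      _ = (∫ p, x i * p.1 i ∂P) - ∫ p, p.1 i * h (x + p.1 + p.2) i ∂P :=
          integral_sub ((int_p1 i).const_mul (x i)) (int_ph i)
      _ = -(((σ₁ ^ 2 : ℝ≥0) : ℝ)
            * ∫ p, fderiv ℝ h (x + p.1 + p.2) (Pi.single i 1) i ∂P) := by
          rw [integral_const_mul, val_p1 i, steinB i]
          ring
  have val_f : ∀ i, ∫ p, ((x + p.1) i - h (x + p.1 + p.2) i) ^ 2 ∂P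
      = ∫ p, (x i - h (x + p.1 + p.2) i) ^ 2 ∂P
        + 2 * ∫ p, p.1 i * (x i - h (x + p.1 + p.2) i) ∂P + ((σ₁ ^ 2 : ℝ≥0) : ℝ) := by
    intro i
    have hexp : ∀ p : (Fin (n + 1) → ℝ) × (Fin (n + 1) → ℝ),
        ((x + p.1) i - h (x + p.1 + p.2) i) ^ 2
          = (x i - h (x + p.1 + p.2) i) ^ 2
            + 2 * (p.1 i * (x i - h (x + p.1 + p.2) i)) + (p.1 i) ^ 2 := by
      intro p; simp only [Pi.add_apply]; ring
    calc ∫ p, ((x + p.1) i - h (x + p.1 + p.2) i) ^ 2 ∂P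
        = ∫ p, ((x i - h (x + p.1 + p.2) i) ^ 2
            + 2 * (p.1 i * (x i - h (x + p.1 + p.2) i)) + (p.1 i) ^ 2) ∂P :=
          integral_congr_ae (Filter.Eventually.of_forall hexp)
      _ = (∫ p, ((x i - h (x + p.1 + p.2) i) ^ 2
            + 2 * (p.1 i * (x i - h (x + p.1 + p.2) i))) ∂P) + ∫ p, (p.1 i) ^ 2 ∂P :=
          integral_add ((int_Ksq i).add ((int_mix i).const_mul 2)) (int_sq1 i)
      _ = (∫ p, (x i - h (x + p.1 + p.2) i) ^ 2 ∂P)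
            + (∫ p, 2 * (p.1 i * (x i - h (x + p.1 + p.2) i)) ∂P)
            + ∫ p, (p.1 i) ^ 2 ∂P := by
          rw [integral_add (int_Ksq i) ((int_mix i).const_mul 2)]
      _ = ∫ p, (x i - h (x + p.1 + p.2) i) ^ 2 ∂P
            + 2 * ∫ p, p.1 i * (x i - h (x + p.1 + p.2) i) ∂P + ((σ₁ ^ 2 : ℝ≥0) : ℝ) := by
          rw [integral_const_mul, val_sq1 i]
  -- final assembly
  have hNr : ((n : ℝ) + 1) ≠ 0 := by positivity
  have hv₁coe : ((σ₁ ^ 2 : ℝ≥0) : ℝ) = (σ₁ : ℝ) ^ 2 := by push_cast; ring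
  have intE1 : Integrable (fun p : (Fin (n + 1) → ℝ) × (Fin (n + 1) → ℝ) =>
      ∑ i, ((x + p.1) i - h (x + p.1 + p.2) i) ^ 2) P :=
    integrable_finset_sum _ fun i _ => int_f i
  have val_F : ∫ p, ((1 / ((n + 1 : ℕ) : ℝ)) * ∑ i, ((x + p.1) i - h (x + p.1 + p.2) i) ^ 2
        - (σ₁ : ℝ) ^ 2
        + (2 * ((σ₁ : ℝ) ^ 2 + (σz : ℝ) ^ 2) / ((n + 1 : ℕ) : ℝ))
          * ∑ i, fderiv ℝ h (x + p.1 + p.2) (Pi.single i 1) i) ∂P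
      = (1 / ((n + 1 : ℕ) : ℝ)) * ∑ i, ∫ p, ((x + p.1) i - h (x + p.1 + p.2) i) ^ 2 ∂P
        - (σ₁ : ℝ) ^ 2
        + (2 * ((σ₁ : ℝ) ^ 2 + (σz : ℝ) ^ 2) / ((n + 1 : ℕ) : ℝ))
          * ∑ i, ∫ p, fderiv ℝ h (x + p.1 + p.2) (Pi.single i 1) i ∂P := by
    calc ∫ p, ((1 / ((n + 1 : ℕ) : ℝ)) * ∑ i, ((x + p.1) i - h (x + p.1 + p.2) i) ^ 2
          - (σ₁ : ℝ) ^ 2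
          + (2 * ((σ₁ : ℝ) ^ 2 + (σz : ℝ) ^ 2) / ((n + 1 : ℕ) : ℝ))
            * ∑ i, fderiv ℝ h (x + p.1 + p.2) (Pi.single i 1) i) ∂P
        = (∫ p, ((1 / ((n + 1 : ℕ) : ℝ)) * ∑ i, ((x + p.1) i - h (x + p.1 + p.2) i) ^ 2
            - (σ₁ : ℝ) ^ 2) ∂P)
          + ∫ p, (2 * ((σ₁ : ℝ) ^ 2 + (σz : ℝ) ^ 2) / ((n + 1 : ℕ) : ℝ))
              * ∑ i, fderiv ℝ h (x + p.1 + p.2) (Pi.single i 1) i ∂P :=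
          integral_add ((intE1.const_mul _).sub (integrable_const _)) (int_D.const_mul _)
      _ = (((1 / ((n + 1 : ℕ) : ℝ))
              * ∫ p, (∑ i, ((x + p.1) i - h (x + p.1 + p.2) i) ^ 2) ∂P)
            - ∫ _p, (σ₁ : ℝ) ^ 2 ∂P)
          + (2 * ((σ₁ : ℝ) ^ 2 + (σz : ℝ) ^ 2) / ((n + 1 : ℕ) : ℝ))
            * ∫ p, (∑ i, fderiv ℝ h (x + p.1 + p.2) (Pi.single i 1) i) ∂P := by
          rw [integral_sub (intE1.const_mul _) (integrable_const _), integral_const_mul,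
            integral_const_mul]
      _ = _ := by
          rw [integral_finset_sum _ fun i _ => int_f i, val_D, integral_const]
          simp [measure_univ]
  have val_G : ∫ p, ((1 / ((n + 1 : ℕ) : ℝ)) * ∑ i, (x i - h (x + p.1 + p.2) i) ^ 2) ∂P
      = (1 / ((n + 1 : ℕ) : ℝ)) * ∑ i, ∫ p, (x i - h (x + p.1 + p.2) i) ^ 2 ∂P := by
    rw [integral_const_mul, integral_finset_sum _ fun i _ => int_Ksq i]
  have hsumf : ∑ i, ∫ p, ((x + p.1) i - h (x + p.1 + p.2) i) ^ 2 ∂P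
      = (∑ i, ∫ p, (x i - h (x + p.1 + p.2) i) ^ 2 ∂P)
        - 2 * (σ₁ : ℝ) ^ 2
          * ∑ i, ∫ p, fderiv ℝ h (x + p.1 + p.2) (Pi.single i 1) i ∂P
        + ((n : ℝ) + 1) * (σ₁ : ℝ) ^ 2 := by
    have hstep : ∀ i : Fin (n + 1), ∫ p, ((x + p.1) i - h (x + p.1 + p.2) i) ^ 2 ∂P
        = ∫ p, (x i - h (x + p.1 + p.2) i) ^ 2 ∂P
          + 2 * (-((σ₁ : ℝ) ^ 2
              * ∫ p, fderiv ℝ h (x + p.1 + p.2) (Pi.single i 1) i ∂P))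
          + (σ₁ : ℝ) ^ 2 := by
      intro i
      rw [val_f i, val_mix i, hv₁coe]
    rw [Finset.sum_congr rfl fun i _ => hstep i, Finset.sum_add_distrib,
      Finset.sum_add_distrib, Finset.sum_const, Finset.card_univ, Fintype.card_fin]
    have h5 : ∑ i : Fin (n + 1), 2 * (-((σ₁ : ℝ) ^ 2
          * ∫ p, fderiv ℝ h (x + p.1 + p.2) (Pi.single i 1) i ∂P))
        = (-2 * (σ₁ : ℝ) ^ 2)
          * ∑ i, ∫ p, fderiv ℝ h (x + p.1 + p.2) (Pi.single i 1) i ∂P := by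
      rw [Finset.mul_sum]
      exact Finset.sum_congr rfl fun i _ => by ring
    rw [h5]
    push_cast
    ring
  rw [val_F, val_G, val_D, hsumf]
  push_cast
  field_simp
  ring


end EsureHelper

/-- Using the total noise variance `σ₁² + σ_z²` (instead of the retained variance `σ₁²`)
in the divergence term of eSURE gives a biased estimator: its bias relative to the MSE
equals `(2σ_z²/N)·E[∑ᵢ ∂hᵢ(y₂)/∂(y₂)ᵢ]`; in particular it is biased whenever `σ_z > 0`
and the expected divergence is nonzero. -/
theorem esure_wrong_variance_bias (N : ℕ) (hN : 0 < N) (x : Fin N → ℝ)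
    (σ₁ σz : ℝ≥0) (hσ₁ : 0 < σ₁)
    (h : (Fin N → ℝ) → (Fin N → ℝ)) (hdiff : ContDiff ℝ 1 h)
    (C : ℝ) (hC : ∀ v : Fin N → ℝ, ‖fderiv ℝ h v‖ ≤ C) :
    ((∫ p : (Fin N → ℝ) × (Fin N → ℝ),
        ((1 / (N : ℝ)) * ∑ i, ((x + p.1) i - h (x + p.1 + p.2) i) ^ 2
          - (σ₁ : ℝ) ^ 2
          + (2 * ((σ₁ : ℝ) ^ 2 + (σz : ℝ) ^ 2) / (N : ℝ))
            * ∑ i, fderiv ℝ h (x + p.1 + p.2) (Pi.single i 1) i)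
      ∂((Measure.pi fun _ : Fin N => gaussianReal 0 (σ₁ ^ 2)).prod
          (Measure.pi fun _ : Fin N => gaussianReal 0 (σz ^ 2))))
      - ∫ p : (Fin N → ℝ) × (Fin N → ℝ),
          (1 / (N : ℝ)) * ∑ i, (x i - h (x + p.1 + p.2) i) ^ 2
        ∂((Measure.pi fun _ : Fin N => gaussianReal 0 (σ₁ ^ 2)).prod
            (Measure.pi fun _ : Fin N => gaussianReal 0 (σz ^ 2)))
      = (2 * (σz : ℝ) ^ 2 / (N : ℝ))
        * ∫ p : (Fin N → ℝ) × (Fin N → ℝ),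
            ∑ i, fderiv ℝ h (x + p.1 + p.2) (Pi.single i 1) i
          ∂((Measure.pi fun _ : Fin N => gaussianReal 0 (σ₁ ^ 2)).prod
              (Measure.pi fun _ : Fin N => gaussianReal 0 (σz ^ 2))))
    ∧ (0 < σz →
        (∫ p : (Fin N → ℝ) × (Fin N → ℝ),
            ∑ i, fderiv ℝ h (x + p.1 + p.2) (Pi.single i 1) i
          ∂((Measure.pi fun _ : Fin N => gaussianReal 0 (σ₁ ^ 2)).prod
              (Measure.pi fun _ : Fin N => gaussianReal 0 (σz ^ 2)))) ≠ 0 →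
        (∫ p : (Fin N → ℝ) × (Fin N → ℝ),
            ((1 / (N : ℝ)) * ∑ i, ((x + p.1) i - h (x + p.1 + p.2) i) ^ 2
              - (σ₁ : ℝ) ^ 2
              + (2 * ((σ₁ : ℝ) ^ 2 + (σz : ℝ) ^ 2) / (N : ℝ))
                * ∑ i, fderiv ℝ h (x + p.1 + p.2) (Pi.single i 1) i)
          ∂((Measure.pi fun _ : Fin N => gaussianReal 0 (σ₁ ^ 2)).prod
              (Measure.pi fun _ : Fin N => gaussianReal 0 (σz ^ 2))))
          ≠ ∫ p : (Fin N → ℝ) × (Fin N → ℝ),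
              (1 / (N : ℝ)) * ∑ i, (x i - h (x + p.1 + p.2) i) ^ 2
            ∂((Measure.pi fun _ : Fin N => gaussianReal 0 (σ₁ ^ 2)).prod
                (Measure.pi fun _ : Fin N => gaussianReal 0 (σz ^ 2)))) := by
  have key := EsureHelper.main_eq N hN x σ₁ σz hσ₁ h hdiff C hC
  refine ⟨key, ?_⟩
  intro hσz hJ heq
  have hc : 2 * (σz : ℝ) ^ 2 / (N : ℝ) ≠ 0 := by
    have h1 : (0:ℝ) < (σz : ℝ) := by exact_mod_cast hσz
    have h2 : (0:ℝ) < (N : ℝ) := by exact_mod_cast hN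
    positivity
  have h0 : 2 * (σz : ℝ) ^ 2 / (N : ℝ)
      * ∫ p : (Fin N → ℝ) × (Fin N → ℝ),
          ∑ i, fderiv ℝ h (x + p.1 + p.2) (Pi.single i 1) i
        ∂((Measure.pi fun _ : Fin N => gaussianReal 0 (σ₁ ^ 2)).prod
            (Measure.pi fun _ : Fin N => gaussianReal 0 (σz ^ 2))) = 0 := by
    rw [← key, heq, sub_self]
  rcases mul_eq_zero.mp h0 with h1 | h1
  · exact hc h1
  · exact hJ h1
end

section
/- If y and z are conditionally independent given x, z has conditional mean x given x, and h(y) is square-integrable, then E[(z - x)ᵀ h(y)] = 0. -/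
open MeasureTheory ProbabilityTheory
open scoped NNReal

open MeasurableSpace Set

lemma exists_countable_piSystem (β : Type*) [mβ : MeasurableSpace β] [CountablyGenerated β] :
    ∃ S : Set (Set β), S.Countable ∧ IsPiSystem S ∧ generateFrom S = mβ := by
  refine ⟨generatePiSystem (countableGeneratingSet β), ?_,
    isPiSystem_generatePiSystem _, ?_⟩
  · have hsub : generatePiSystem (countableGeneratingSet β) ⊆
        sInter '' {T | T.Finite ∧ T ⊆ countableGeneratingSet β} := by
      intro t ht
      induction ht with
      | base hs => exact ⟨{_}, ⟨Set.finite_singleton _, Set.singleton_subset_iff.2 hs⟩,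
          Set.sInter_singleton _⟩
      | inter hs ht hnon ihs iht =>
        obtain ⟨T1, ⟨hT1f, hT1s⟩, rfl⟩ := ihs
        obtain ⟨T2, ⟨hT2f, hT2s⟩, rfl⟩ := iht
        exact ⟨T1 ∪ T2, ⟨hT1f.union hT2f, Set.union_subset hT1s hT2s⟩,
          (Set.sInter_union T1 T2)⟩
    exact ((Set.countable_setOf_finite_subset
      (countable_countableGeneratingSet (α := β))).image _).mono hsub
  · rw [generateFrom_generatePiSystem_eq, generateFrom_countableGeneratingSet]


lemma ae_indepFun_condExpKernel {Ω : Type*} {m' : MeasurableSpace Ω} [mΩ : MeasurableSpace Ω]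
    [StandardBorelSpace Ω] {μ : Measure Ω} [IsProbabilityMeasure μ]
    (hm : m' ≤ mΩ)
    {β γ : Type*} [mβ : MeasurableSpace β] [CountablyGenerated β]
    [mγ : MeasurableSpace γ] [CountablyGenerated γ]
    {y : Ω → β} {z : Ω → γ} (hy : Measurable y) (hz : Measurable z)
    (hindep : CondIndepFun m' hm y z μ) :
    ∀ᵐ ω ∂μ, IndepFun y z (condExpKernel μ m' ω) := by
  obtain ⟨Sβ, hSβc, hSβpi, hSβgen⟩ := exists_countable_piSystem β
  obtain ⟨Sγ, hSγc, hSγpi, hSγgen⟩ := exists_countable_piSystem γ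
  have hbase : ∀ s ∈ Sβ, ∀ t ∈ Sγ, ∀ᵐ ω ∂μ,
      condExpKernel μ m' ω (y ⁻¹' s ∩ z ⁻¹' t)
        = condExpKernel μ m' ω (y ⁻¹' s) * condExpKernel μ m' ω (z ⁻¹' t) := by
    intro s hs t ht
    refine ae_of_ae_trim hm (hindep _ _ ⟨s, ?_, rfl⟩ ⟨t, ?_, rfl⟩)
    · rw [← hSβgen]; exact measurableSet_generateFrom hs
    · rw [← hSγgen]; exact measurableSet_generateFrom ht
  have hae : ∀ᵐ ω ∂μ, ∀ s ∈ Sβ, ∀ t ∈ Sγ,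
      condExpKernel μ m' ω (y ⁻¹' s ∩ z ⁻¹' t)
        = condExpKernel μ m' ω (y ⁻¹' s) * condExpKernel μ m' ω (z ⁻¹' t) := by
    rw [ae_ball_iff hSβc]
    intro s hs
    rw [ae_ball_iff hSγc]
    intro t ht
    exact hbase s hs t ht
  filter_upwards [hae] with ω hω
  have : IsProbabilityMeasure (condExpKernel μ m' ω) :=
    IsMarkovKernel.isProbabilityMeasure ω
  have h1 : IndepSets ((fun s => y ⁻¹' s) '' Sβ) ((fun t => z ⁻¹' t) '' Sγ)
      (condExpKernel μ m' ω) := by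
    rw [IndepSets_iff]
    rintro _ _ ⟨s, hs, rfl⟩ ⟨t, ht, rfl⟩
    exact hω s hs t ht
  have h2 : Indep (MeasurableSpace.comap y mβ) (MeasurableSpace.comap z mγ)
      (condExpKernel μ m' ω) := by
    refine IndepSets.indep (hy.comap_le) (hz.comap_le) ?_ ?_ ?_ ?_ h1
    · have := hSβpi.comap y
      exact this
    · have := hSγpi.comap z
      exact this
    · rw [← hSβgen, MeasurableSpace.comap_generateFrom]
    · rw [← hSγgen, MeasurableSpace.comap_generateFrom]
  exact h2

lemma memℒp_two_condexp {Ω : Type*} {m' : MeasurableSpace Ω} [mΩ : MeasurableSpace Ω]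
    (hm : m' ≤ mΩ) (μ : Measure Ω) [IsFiniteMeasure μ] {f : Ω → ℝ}
    (hf : MemLp f 2 μ) : MemLp (μ[f|m']) 2 μ := by
  have hfi : Integrable f μ := hf.integrable one_le_two
  set g : Ω → ℝ := ((condExpL2 ℝ ℝ hm (hf.toLp f) : Lp ℝ 2 μ) : Ω → ℝ) with hg
  have hgmem : MemLp g 2 μ := Lp.memLp _
  have heq : μ[f|m'] =ᵐ[μ] g := by
    refine (ae_eq_condExp_of_forall_setIntegral_eq hm hfi ?_ ?_ ?_).symm
    · intro s hs hμs
      exact integrableOn_condExpL2_of_measure_ne_top hm hμs.ne _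
    · intro s hs hμs
      rw [integral_condExpL2_eq hm (hf.toLp f) hs hμs.ne]
      exact setIntegral_congr_ae (hm s hs) ((hf.coeFn_toLp).mono fun ω hω _ => hω)
    · exact aestronglyMeasurable_condExpL2 hm _
  exact hgmem.ae_eq heq.symm


lemma integral_mul_eq_integral_condexp_mul {Ω : Type*} {m' : MeasurableSpace Ω}
    [mΩ : MeasurableSpace Ω] [StandardBorelSpace Ω] (μ : Measure Ω) [IsProbabilityMeasure μ]
    (hm : m' ≤ mΩ)
    {β γ : Type*} [mβ : MeasurableSpace β] [CountablyGenerated β]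
    [mγ : MeasurableSpace γ] [CountablyGenerated γ]
    {y : Ω → β} {z : Ω → γ} (hy : Measurable y) (hz : Measurable z)
    (hindep : CondIndepFun m' hm y z μ)
    {f : β → ℝ} {g : γ → ℝ} (hf : Measurable f) (hg : Measurable g)
    (hfy : MemLp (fun ω => f (y ω)) 2 μ) (hgz : MemLp (fun ω => g (z ω)) 2 μ) :
    ∫ ω, f (y ω) * g (z ω) ∂μ
      = ∫ ω, (μ[fun ω' => f (y ω')|m']) ω * (μ[fun ω' => g (z ω')|m']) ω ∂μ := by
  set F : Ω → ℝ := fun ω => f (y ω)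
  set G : Ω → ℝ := fun ω => g (z ω)
  have hF1 : Integrable F μ := hfy.integrable one_le_two
  have hG1 : Integrable G μ := hgz.integrable one_le_two
  have hFG : Integrable (fun ω => F ω * G ω) μ :=
    memLp_one_iff_integrable.mp (hgz.smul (r := 1) hfy (hpqr := ⟨by simp [ENNReal.inv_two_add_inv_two]⟩) :)
  have haeind := ae_indepFun_condExpKernel hm hy hz hindep
  have hchain : (μ[fun ω => F ω * G ω|m'])
      =ᵐ[μ] fun ω => (μ[F|m']) ω * (μ[G|m']) ω := by
    have h1 : (μ[fun ω => F ω * G ω|m'])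
        =ᵐ[μ] fun ω => ∫ ω', F ω' * G ω' ∂(condExpKernel μ m' ω) :=
      condExp_ae_eq_integral_condExpKernel hm hFG
    have h2 : (fun ω => ∫ ω', F ω' * G ω' ∂(condExpKernel μ m' ω))
        =ᵐ[μ] fun ω => (∫ ω', F ω' ∂(condExpKernel μ m' ω))
          * ∫ ω', G ω' ∂(condExpKernel μ m' ω) := by
      filter_upwards [haeind] with ω hω
      exact hω.integral_fun_comp_mul_comp hy.aemeasurable hz.aemeasurable
        hf.aestronglyMeasurable hg.aestronglyMeasurable
    have h3 : (fun ω => (∫ ω', F ω' ∂(condExpKernel μ m' ω))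
          * ∫ ω', G ω' ∂(condExpKernel μ m' ω))
        =ᵐ[μ] fun ω => (μ[F|m']) ω * (μ[G|m']) ω :=
      ((condExp_ae_eq_integral_condExpKernel hm hF1).symm).mul
        ((condExp_ae_eq_integral_condExpKernel hm hG1).symm)
    exact (h1.trans h2).trans h3
  calc ∫ ω, F ω * G ω ∂μ
      = ∫ ω, (μ[fun ω => F ω * G ω|m']) ω ∂μ := (integral_condExp hm).symm
    _ = ∫ ω, (μ[F|m']) ω * (μ[G|m']) ω ∂μ := integral_congr_ae hchain

open scoped NNReal

/-- Cross-term vanishing lemma justifying Noise2Noise: if `y` and `z` are conditionally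
independent given `x`, `z` has conditional mean `x` given `x`, and `h(y)` is
square-integrable, then `E[(z - x)ᵀ h(y)] = 0`. -/
theorem noise2noise_cross_term_zero {Ω : Type*} [MeasurableSpace Ω]
    [StandardBorelSpace Ω] (μ : Measure Ω) [IsProbabilityMeasure μ] (N : ℕ)
    (x y z : Ω → (Fin N → ℝ))
    (hx : Measurable x) (hy : Measurable y) (hz : Measurable z)
    (hz2 : MemLp z 2 μ)
    (hm : MeasurableSpace.comap x inferInstance ≤ ‹MeasurableSpace Ω›)
    -- conditionally on x, z has mean x:
    (hmean : ∀ i, (μ[(fun ω => z ω i) | MeasurableSpace.comap x inferInstance])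
      =ᵐ[μ] fun ω => x ω i)
    -- y and z are conditionally independent given x:
    (hindep : CondIndepFun (MeasurableSpace.comap x inferInstance) hm y z μ)
    (h : (Fin N → ℝ) → (Fin N → ℝ)) (hmeas : Measurable h)
    (hh2 : MemLp (fun ω => h (y ω)) 2 μ) :
    ∫ ω, ∑ i, (z ω i - x ω i) * h (y ω) i ∂μ = 0 := by
  -- coordinatewise square integrability
  have hF2 : ∀ i : Fin N, MemLp (fun ω => h (y ω) i) 2 μ := fun i =>
    hh2.of_le ((measurable_pi_apply i).comp (hmeas.comp hy)).aestronglyMeasurable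
      (Filter.Eventually.of_forall fun ω => norm_le_pi_norm (h (y ω)) i)
  have hzi2 : ∀ i : Fin N, MemLp (fun ω => z ω i) 2 μ := fun i =>
    hz2.of_le ((measurable_pi_apply i).comp hz).aestronglyMeasurable
      (Filter.Eventually.of_forall fun ω => norm_le_pi_norm (z ω) i)
  have hxi2 : ∀ i : Fin N, MemLp (fun ω => x ω i) 2 μ := fun i =>
    MemLp.ae_eq (hmean i) (memℒp_two_condexp hm μ (hzi2 i))
  have half : (1 : ENNReal) / 1 = 1 / 2 + 1 / 2 := by
    simp [ENNReal.inv_two_add_inv_two]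
  have hPz : ∀ i : Fin N, Integrable (fun ω => z ω i * h (y ω) i) μ := fun i =>
    memLp_one_iff_integrable.mp ((hF2 i).smul (r := 1) (hzi2 i) (hpqr := ⟨by simp [ENNReal.inv_two_add_inv_two]⟩) :)
  have hPx : ∀ i : Fin N, Integrable (fun ω => x ω i * h (y ω) i) μ := fun i =>
    memLp_one_iff_integrable.mp ((hF2 i).smul (r := 1) (hxi2 i) (hpqr := ⟨by simp [ENNReal.inv_two_add_inv_two]⟩) :)
  have hxm' : Measurable[MeasurableSpace.comap x inferInstance] x := fun s hs => ⟨s, hs, rfl⟩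
  have key : ∀ i : Fin N,
      ∫ ω, z ω i * h (y ω) i ∂μ = ∫ ω, x ω i * h (y ω) i ∂μ := by
    intro i
    have hfact := integral_mul_eq_integral_condexp_mul μ hm hy hz hindep
      (f := fun v => h v i) (g := fun v => v i)
      ((measurable_pi_apply i).comp hmeas) (measurable_pi_apply i)
      (hF2 i) (hzi2 i)
    have hB : ∫ ω, x ω i * h (y ω) i ∂μ
        = ∫ ω, x ω i * (μ[fun ω' => h (y ω') i|MeasurableSpace.comap x inferInstance]) ω ∂μ := by
      have hxs : StronglyMeasurable[MeasurableSpace.comap x inferInstance] (fun ω => x ω i) :=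
        Measurable.stronglyMeasurable (((measurable_pi_apply i)).comp hxm')
      have hpull := condExp_mul_of_stronglyMeasurable_left (μ := μ) hxs
        (f := fun ω => x ω i) (g := fun ω => h (y ω) i) (hPx i)
        ((hF2 i).integrable one_le_two)
      calc ∫ ω, x ω i * h (y ω) i ∂μ
          = ∫ ω, (μ[fun ω' => x ω' i * h (y ω') i|MeasurableSpace.comap x inferInstance]) ω ∂μ := (integral_condExp hm).symm
        _ = ∫ ω, x ω i * (μ[fun ω' => h (y ω') i|MeasurableSpace.comap x inferInstance]) ω ∂μ := integral_congr_ae hpull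
    have hA : ∫ ω, z ω i * h (y ω) i ∂μ
        = ∫ ω, x ω i * (μ[fun ω' => h (y ω') i|MeasurableSpace.comap x inferInstance]) ω ∂μ := by
      have hcomm : ∫ ω, z ω i * h (y ω) i ∂μ = ∫ ω, h (y ω) i * z ω i ∂μ := by
        congr 1; funext ω; ring
      rw [hcomm, hfact]
      refine integral_congr_ae ?_
      filter_upwards [hmean i] with ω hω
      rw [hω]; ring
    rw [hA, hB]
  have hterm : ∀ i : Fin N,
      ∫ ω, (z ω i - x ω i) * h (y ω) i ∂μ = 0 := by
    intro i
    have hsplit : (fun ω => (z ω i - x ω i) * h (y ω) i)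
        = fun ω => z ω i * h (y ω) i - x ω i * h (y ω) i := by
      funext ω; ring
    rw [hsplit, integral_sub (hPz i) (hPx i), key i, sub_self]
  have hint : ∀ i : Fin N, Integrable (fun ω => (z ω i - x ω i) * h (y ω) i) μ := by
    intro i
    have hsplit : (fun ω => (z ω i - x ω i) * h (y ω) i)
        = fun ω => z ω i * h (y ω) i - x ω i * h (y ω) i := by
      funext ω; ring
    rw [hsplit]; exact (hPz i).sub (hPx i)
  rw [integral_finset_sum _ (fun i _ => hint i)]
  simp [hterm]
end
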